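/- Let F be a finite family of pseudo-lines any two distinct members of which cross exactly once. Consider the set system 𝒮 on ground set F whose ranges are all sets of the form { f ∈ F : exactly one of f(x₁) > y₁ and f(x₂) > y₂ holds }, taken over all pairs of points (x₁, y₁), (x₂, y₂) ∈ ℝ² (i.e., the sets of pseudo-lines separating two points of the plane). Then the VC dimension of (F, 𝒮) — the largest cardinality of a subset Y ⊆ F such that every subset of Y equals Y ∩ S for some S ∈ 𝒮 — is less than 12·log₂ 6; in particular it is at most 31. -/

import Mathlib

noncomputable local instance : DecidableEq (ℝ → ℝ) := Classical.decEq _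

/-- `Prec f g` (written `f ≺ g`): the pseudo-lines `f` and `g` cross exactly once,
at a point `x₀` with `f x > g x` for all `x < x₀` and `f x < g x` for all `x > x₀`. -/
def Prec (f g : ℝ → ℝ) : Prop :=
  ∃ x₀ : ℝ, f x₀ = g x₀ ∧ (∀ x < x₀, g x < f x) ∧ (∀ x > x₀, f x < g x)

/-- Two pseudo-lines cross exactly once. -/
def CrossesOnce (f g : ℝ → ℝ) : Prop :=
  Prec f g ∨ Prec g f

open Classical in
/-- A choice of a crossing point for `f` and `g`. -/
noncomputable def cpt (f g : ℝ → ℝ) : ℝ :=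
  if h : ∃ t : ℝ, f t = g t ∧ ∀ x x' : ℝ,
      ((x < t ∧ x' < t) ∨ (t < x ∧ t < x')) → (g x < f x ↔ g x' < f x') then
    h.choose else 0

lemma cpt_spec {f g : ℝ → ℝ} (h : CrossesOnce f g) :
    f (cpt f g) = g (cpt f g) ∧ ∀ x x' : ℝ,
      ((x < cpt f g ∧ x' < cpt f g) ∨ (cpt f g < x ∧ cpt f g < x')) →
      (g x < f x ↔ g x' < f x') := by
  have hex : ∃ t : ℝ, f t = g t ∧ ∀ x x' : ℝ,
      ((x < t ∧ x' < t) ∨ (t < x ∧ t < x')) → (g x < f x ↔ g x' < f x') := by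
    rcases h with ⟨x₀, heq, hl, hr⟩ | ⟨x₀, heq, hl, hr⟩
    · refine ⟨x₀, heq, fun x x' hx => ?_⟩
      rcases hx with ⟨h1, h2⟩ | ⟨h1, h2⟩
      · exact iff_of_true (hl x h1) (hl x' h2)
      · exact iff_of_false (lt_asymm (hr x h1)) (lt_asymm (hr x' h2))
    · refine ⟨x₀, heq.symm, fun x x' hx => ?_⟩
      rcases hx with ⟨h1, h2⟩ | ⟨h1, h2⟩
      · exact iff_of_false (lt_asymm (hl x h1)) (lt_asymm (hl x' h2))
      · exact iff_of_true (hr x h1) (hr x' h2)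
  rw [cpt, dif_pos hex]
  exact hex.choose_spec

/-- The main counting lemma : if every subset of `Y` is a trace of a
separating range, then `2^|Y| ≤ ((|Y|²+1)(|Y|+1))²`. -/
lemma main_count (F Y : Finset (ℝ → ℝ)) (hYF : Y ⊆ F)
    (hcross : ∀ f ∈ F, ∀ g ∈ F, f ≠ g → CrossesOnce f g)
    (hsh : ∀ Z ⊆ Y, ∃ x₁ y₁ x₂ y₂ : ℝ,
      Y ∩ F.filter (fun f =>
        (y₁ < f x₁ ∧ ¬ y₂ < f x₂) ∨ (y₂ < f x₂ ∧ ¬ y₁ < f x₁)) = Z) :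
    2 ^ Y.card ≤ ((Y.card * Y.card + 1) * (Y.card + 1)) ^ 2 := by
  classical
  set X : Finset ℝ := (Y ×ˢ Y).image (fun p => cpt p.1 p.2) with hXdef
  have crossY : ∀ f ∈ Y, ∀ g ∈ Y, f ≠ g → CrossesOnce f g :=
    fun f hf g hg => hcross f (hYF hf) g (hYF hg)
  have cptX : ∀ f ∈ Y, ∀ g ∈ Y, cpt f g ∈ X := fun f hf g hg =>
    Finset.mem_image.2 ⟨(f, g), Finset.mem_product.2 ⟨hf, hg⟩, rfl⟩
  -- Shift lemma: every trace is realizable at an `x` avoiding `X`.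
  have shift : ∀ x y : ℝ, ∃ x' y' : ℝ, x' ∉ X ∧
      Y.filter (fun f => y < f x) = Y.filter (fun f => y' < f x') := by
    intro x y
    obtain ⟨x', hxx', hx'X, hgap⟩ :
        ∃ x' : ℝ, x < x' ∧ x' ∉ X ∧ ∀ s ∈ X, x < s → x' < s := by
      by_cases hne : (X.filter (fun s => x < s)).Nonempty
      · set t := (X.filter (fun s => x < s)).min' hne with ht
        have hxt : x < t := (Finset.mem_filter.1 ((X.filter _).min'_mem hne)).2
        refine ⟨(x + t) / 2, by linarith, ?_, ?_⟩
        · intro hmem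
          have : t ≤ (x + t) / 2 :=
            (X.filter _).min'_le _ (Finset.mem_filter.2 ⟨hmem, by linarith⟩)
          linarith
        · intro s hs hxs
          have : t ≤ s := (X.filter _).min'_le _ (Finset.mem_filter.2 ⟨hs, hxs⟩)
          linarith
      · refine ⟨x + 1, by linarith, ?_, ?_⟩
        · intro hmem
          exact hne ⟨x + 1, Finset.mem_filter.2 ⟨hmem, by linarith⟩⟩
        · intro s hs hxs
          exact absurd ⟨s, Finset.mem_filter.2 ⟨hs, hxs⟩⟩ hne
    have key : ∀ f ∈ Y, ∀ g ∈ Y, g x < f x → g x' < f x' := by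
      intro f hf g hg hgf
      have hfg : f ≠ g := fun e => absurd hgf (by rw [e]; exact lt_irrefl _)
      have spec := cpt_spec (crossY f hf g hg hfg)
      have htX : cpt f g ∈ X := cptX f hf g hg
      have htx : cpt f g ≠ x := by
        intro e; rw [e] at spec; exact absurd spec.1 (ne_of_gt hgf)
      rcases lt_or_gt_of_ne htx with hlt | hgt
      · exact (spec.2 x x' (Or.inr ⟨hlt, lt_trans hlt hxx'⟩)).1 hgf
      · exact (spec.2 x x' (Or.inl ⟨hgt, hgap _ htX hgt⟩)).1 hgf
    by_cases hcomp : (Y \ Y.filter (fun f => y < f x)).Nonempty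
    · refine ⟨x', (Y \ Y.filter (fun f => y < f x)).sup' hcomp (fun g => g x'), hx'X, ?_⟩
      ext f
      simp only [Finset.mem_filter]
      constructor
      · rintro ⟨hfY, hyf⟩
        refine ⟨hfY, (Finset.sup'_lt_iff hcomp).2 ?_⟩
        intro g hg
        obtain ⟨hgY, hgA⟩ := Finset.mem_sdiff.1 hg
        have hgx : g x ≤ y := by
          by_contra hgx
          exact hgA (Finset.mem_filter.2 ⟨hgY, lt_of_not_ge hgx⟩)
        exact key f hfY g hgY (lt_of_le_of_lt hgx hyf)
      · rintro ⟨hfY, hsup⟩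
        refine ⟨hfY, ?_⟩
        by_contra hyf
        have hfA : f ∈ Y \ Y.filter (fun f => y < f x) :=
          Finset.mem_sdiff.2 ⟨hfY, fun hmem => hyf (Finset.mem_filter.1 hmem).2⟩
        exact absurd hsup (not_lt.2 (Finset.le_sup' (fun g => g x') hfA))
    · have hAY : Y.filter (fun f => y < f x) = Y := by
        have h1 : Y \ Y.filter (fun f => y < f x) = ∅ :=
          Finset.not_nonempty_iff_eq_empty.1 hcomp
        refine le_antisymm (Finset.filter_subset _ _) ?_
        intro f hf
        by_contra hfA
        have : f ∈ Y \ Y.filter (fun f => y < f x) := Finset.mem_sdiff.2 ⟨hf, hfA⟩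
        rw [h1] at this; exact absurd this (Finset.notMem_empty f)
      by_cases hY : Y.Nonempty
      · refine ⟨x', Y.inf' hY (fun g => g x') - 1, hx'X, ?_⟩
        rw [hAY]
        refine (Finset.filter_eq_self.2 ?_).symm
        intro f hf
        have := Finset.inf'_le (fun g => g x') hf
        linarith
      · have hYe : Y = ∅ := Finset.not_nonempty_iff_eq_empty.1 hY
        exact ⟨x', 0, hx'X, by rw [hYe]; simp⟩
  -- The family of traces of "above a point" ranges, realized off `X`.
  set 𝒜 : Finset (Finset (ℝ → ℝ)) :=
    Y.powerset.filter (fun A => ∃ x y : ℝ, x ∉ X ∧ A = Y.filter (fun f => y < f x))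
    with h𝒜
  -- Cardinality bound on 𝒜.
  have h𝒜card : 𝒜.card ≤ (Y.card * Y.card + 1) * (Y.card + 1) := by
    have hwit : ∀ A ∈ 𝒜, ∃ x y : ℝ, x ∉ X ∧ A = Y.filter (fun f => y < f x) :=
      fun A hA => (Finset.mem_filter.1 hA).2
    choose! xw yw hxw hAw using hwit
    have hinj : Set.InjOn (fun A => ((X.filter (fun s => s < xw A)).card, A.card))
        ↑𝒜 := by
      intro A hA B hB hEq
      have hA' : A ∈ 𝒜 := hA
      have hB' : B ∈ 𝒜 := hB
      have h1 : (X.filter (fun s => s < xw A)).card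
          = (X.filter (fun s => s < xw B)).card := congrArg Prod.fst hEq
      have h2 : A.card = B.card := congrArg Prod.snd hEq
      have hfil : X.filter (fun s => s < xw A) = X.filter (fun s => s < xw B) := by
        rcases le_total (xw A) (xw B) with hle | hle
        · exact Finset.eq_of_subset_of_card_le
            (Finset.monotone_filter_right X (fun s _ hs => lt_of_lt_of_le hs hle))
            (le_of_eq h1.symm)
        · exact (Finset.eq_of_subset_of_card_le
            (Finset.monotone_filter_right X (fun s _ hs => lt_of_lt_of_le hs hle))
            (le_of_eq h1)).symm
      have hiff : ∀ t ∈ X, (t < xw A ↔ t < xw B) := by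
        intro t ht
        have := Finset.ext_iff.1 hfil t
        simp only [Finset.mem_filter, ht, true_and] at this
        exact this
      by_contra hne
      have hAB : ∃ f, f ∈ A ∧ f ∉ B := by
        by_contra hsub
        push_neg at hsub
        exact hne (Finset.eq_of_subset_of_card_le hsub (le_of_eq h2.symm))
      have hBA : ∃ g, g ∈ B ∧ g ∉ A := by
        by_contra hsub
        push_neg at hsub
        exact hne (Finset.eq_of_subset_of_card_le hsub (le_of_eq h2)).symm
      obtain ⟨f, hfA, hfB⟩ := hAB
      obtain ⟨g, hgB, hgA⟩ := hBA
      have hAeq := hAw A hA'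
      have hBeq := hAw B hB'
      have hfA2 : f ∈ Y.filter (fun f => yw A < f (xw A)) := by rw [← hAeq]; exact hfA
      have hgB2 : g ∈ Y.filter (fun f => yw B < f (xw B)) := by rw [← hBeq]; exact hgB
      have hfY : f ∈ Y := (Finset.mem_filter.1 hfA2).1
      have hgY : g ∈ Y := (Finset.mem_filter.1 hgB2).1
      have hfxA : yw A < f (xw A) := (Finset.mem_filter.1 hfA2).2
      have hgxB : yw B < g (xw B) := (Finset.mem_filter.1 hgB2).2
      have hgxA : ¬ yw A < g (xw A) := fun h =>
        hgA (by rw [hAeq]; exact Finset.mem_filter.2 ⟨hgY, h⟩)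
      have hfxB : ¬ yw B < f (xw B) := fun h =>
        hfB (by rw [hBeq]; exact Finset.mem_filter.2 ⟨hfY, h⟩)
      have hx1 : g (xw A) < f (xw A) := lt_of_le_of_lt (not_lt.1 hgxA) hfxA
      have hx2 : f (xw B) < g (xw B) := lt_of_le_of_lt (not_lt.1 hfxB) hgxB
      have hfg : f ≠ g := fun e => absurd hx1 (by rw [e]; exact lt_irrefl _)
      have spec := cpt_spec (crossY f hfY g hgY hfg)
      have htX : cpt f g ∈ X := cptX f hfY g hgY
      have htA : cpt f g ≠ xw A := by
        intro e; rw [e] at spec; exact absurd spec.1 (ne_of_gt hx1)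
      have htB : cpt f g ≠ xw B := by
        intro e; rw [e] at spec; exact absurd spec.1 (ne_of_lt hx2)
      rcases lt_or_gt_of_ne htA with hlt | hgt
      · have hltB : cpt f g < xw B := (hiff _ htX).1 hlt
        exact lt_asymm hx2 ((spec.2 (xw A) (xw B) (Or.inr ⟨hlt, hltB⟩)).1 hx1)
      · have hgtB : xw B < cpt f g :=
          lt_of_le_of_ne (not_lt.1 (fun h => absurd ((hiff _ htX).2 h)
            (not_lt.2 (le_of_lt hgt)))) htB.symm
        exact lt_asymm hx2 ((spec.2 (xw A) (xw B) (Or.inl ⟨hgt, hgtB⟩)).1 hx1)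
    have hmaps : ∀ A ∈ 𝒜, ((X.filter (fun s => s < xw A)).card, A.card) ∈
        (Finset.range (X.card + 1)) ×ˢ (Finset.range (Y.card + 1)) := by
      intro A hA
      refine Finset.mem_product.2 ⟨Finset.mem_range.2 ?_, Finset.mem_range.2 ?_⟩
      · exact Nat.lt_succ_of_le (Finset.card_filter_le _ _)
      · exact Nat.lt_succ_of_le
          (Finset.card_le_card (Finset.mem_powerset.1 (Finset.mem_filter.1 hA).1))
    have hle := Finset.card_le_card_of_injOn _ hmaps hinj
    have hXcard : X.card ≤ Y.card * Y.card := by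
      calc X.card ≤ (Y ×ˢ Y).card := Finset.card_image_le
        _ = Y.card * Y.card := Finset.card_product _ _
    calc 𝒜.card ≤ ((Finset.range (X.card + 1)) ×ˢ (Finset.range (Y.card + 1))).card := hle
      _ = (X.card + 1) * (Y.card + 1) := by
          rw [Finset.card_product, Finset.card_range, Finset.card_range]
      _ ≤ (Y.card * Y.card + 1) * (Y.card + 1) :=
          Nat.mul_le_mul_right _ (Nat.add_le_add_right hXcard 1)
  -- Surjection from pairs of traces onto the powerset via symmetric difference.
  have hsurj : (2 : ℕ) ^ Y.card ≤ 𝒜.card * 𝒜.card := by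
    have hs : Set.SurjOn
        (fun p : Finset (ℝ → ℝ) × Finset (ℝ → ℝ) => (p.1 \ p.2) ∪ (p.2 \ p.1))
        ↑(𝒜 ×ˢ 𝒜) ↑Y.powerset := by
      intro Z hZ
      have hZY : Z ⊆ Y := Finset.mem_powerset.1 hZ
      obtain ⟨x₁, y₁, x₂, y₂, heq⟩ := hsh Z hZY
      obtain ⟨x₁', y₁', hx₁X, he₁⟩ := shift x₁ y₁
      obtain ⟨x₂', y₂', hx₂X, he₂⟩ := shift x₂ y₂
      have hA₁m : Y.filter (fun f => y₁ < f x₁) ∈ 𝒜 :=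
        Finset.mem_filter.2 ⟨Finset.mem_powerset.2 (Finset.filter_subset _ _),
          x₁', y₁', hx₁X, he₁⟩
      have hA₂m : Y.filter (fun f => y₂ < f x₂) ∈ 𝒜 :=
        Finset.mem_filter.2 ⟨Finset.mem_powerset.2 (Finset.filter_subset _ _),
          x₂', y₂', hx₂X, he₂⟩
      refine ⟨(Y.filter (fun f => y₁ < f x₁), Y.filter (fun f => y₂ < f x₂)),
        Finset.mem_coe.2 (Finset.mem_product.2 ⟨hA₁m, hA₂m⟩), ?_⟩
      show (Y.filter (fun f => y₁ < f x₁) \ Y.filter (fun f => y₂ < f x₂)) ∪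
          (Y.filter (fun f => y₂ < f x₂) \ Y.filter (fun f => y₁ < f x₁)) = Z
      rw [← heq]
      ext f
      have hFf : f ∈ Y → f ∈ F := fun h => hYF h
      simp only [Finset.mem_union, Finset.mem_sdiff, Finset.mem_inter,
        Finset.mem_filter]
      tauto
    have hcard := Finset.card_le_card_of_surjOn _ hs
    rwa [Finset.card_powerset, Finset.card_product] at hcard
  calc (2 : ℕ) ^ Y.card ≤ 𝒜.card * 𝒜.card := hsurj
    _ ≤ ((Y.card * Y.card + 1) * (Y.card + 1)) ^ 2 := by
        rw [pow_two]; exact Nat.mul_le_mul h𝒜card h𝒜card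

/-- The VC dimension of the range space on a pairwise-crossing family of
pseudo-lines whose ranges are the sets of pseudo-lines separating two points of
the plane is less than `12·log₂ 6`; in particular it is at most `31`. -/
theorem vc_dim_separating_ranges
    (F : Finset (ℝ → ℝ))
    (hcont : ∀ f ∈ F, Continuous f)
    (hcross : ∀ f ∈ F, ∀ g ∈ F, f ≠ g → CrossesOnce f g) :
    ∀ Y : Finset (ℝ → ℝ), Y ⊆ F →
      (∀ Z ⊆ Y, ∃ x₁ y₁ x₂ y₂ : ℝ,
        Y ∩ F.filter (fun f =>
          (y₁ < f x₁ ∧ ¬ y₂ < f x₂) ∨ (y₂ < f x₂ ∧ ¬ y₁ < f x₁)) = Z) →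
      (Y.card : ℝ) < 12 * Real.logb 2 6 ∧ Y.card ≤ 31 := by
  intro Y hYF hsh
  have hcard : Y.card ≤ 31 := by
    by_contra hlt
    push_neg at hlt
    have h32 : 32 ≤ Y.card := hlt
    obtain ⟨Y', hY'Y, hY'card⟩ := Finset.exists_subset_card_eq h32
    have hY'F : Y' ⊆ F := hY'Y.trans hYF
    have hsh' : ∀ Z ⊆ Y', ∃ x₁ y₁ x₂ y₂ : ℝ,
        Y' ∩ F.filter (fun f =>
          (y₁ < f x₁ ∧ ¬ y₂ < f x₂) ∨ (y₂ < f x₂ ∧ ¬ y₁ < f x₁)) = Z := by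
      intro Z hZY'
      obtain ⟨x₁, y₁, x₂, y₂, heq⟩ := hsh Z (hZY'.trans hY'Y)
      refine ⟨x₁, y₁, x₂, y₂, ?_⟩
      apply Finset.Subset.antisymm
      · intro f hf
        obtain ⟨hf1, hf2⟩ := Finset.mem_inter.1 hf
        have : f ∈ Y ∩ F.filter _ := Finset.mem_inter.2 ⟨hY'Y hf1, hf2⟩
        rw [heq] at this
        exact this
      · intro f hf
        refine Finset.mem_inter.2 ⟨hZY' hf, ?_⟩
        have hf2 : f ∈ Y ∩ F.filter (fun f =>
            (y₁ < f x₁ ∧ ¬ y₂ < f x₂) ∨ (y₂ < f x₂ ∧ ¬ y₁ < f x₁)) := by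
          rw [heq]; exact hf
        exact (Finset.mem_inter.1 hf2).2
    have hb := main_count F Y' hY'F hcross hsh'
    rw [hY'card] at hb
    norm_num at hb
  refine ⟨?_, hcard⟩
  have h31 : (31 : ℝ) < 12 * Real.logb 2 6 := by
    have h2 : (0 : ℝ) < Real.log 2 := Real.log_pos (by norm_num)
    have hlog : Real.log ((2 : ℝ) ^ (31 : ℕ)) < Real.log ((6 : ℝ) ^ (12 : ℕ)) :=
      Real.log_lt_log (by positivity) (by norm_num)
    rw [Real.log_pow, Real.log_pow] at hlog
    rw [Real.logb, ← mul_div_assoc, lt_div_iff₀ h2]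
    push_cast at hlog
    linarith
  calc (Y.card : ℝ) ≤ 31 := by exact_mod_cast hcard
    _ < 12 * Real.logb 2 6 := h31
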